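/- Let R be a commutative ring and q ∈ R nilpotent. Let A(R) = R[[x₁,x₂]]/(x₁x₂ − q). If u ∈ A(R) is a unit satisfying x₁·u = x₁ and x₂·u^{-1} = x₂, then u = 1. -/

import Mathlib

open MvPowerSeries

private lemma aux_X_mul_eq_zero {R : Type*} [CommRing R] {σ : Type*} (s : σ)
    {P : MvPowerSeries σ R} (h : MvPowerSeries.X s * P = 0) : P = 0 := by
  ext m
  have h1 := MvPowerSeries.coeff_add_monomial_mul (m := Finsupp.single s 1) (n := m)
    (φ := P) (1 : R)
  rw [← MvPowerSeries.X_def, h] at h1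
  simpa using h1.symm

private lemma aux_X_pow_mul_eq_zero {R : Type*} [CommRing R] {σ : Type*} (s : σ) (k : ℕ) :
    ∀ {P : MvPowerSeries σ R}, MvPowerSeries.X s ^ k * P = 0 → P = 0 := by
  induction k with
  | zero => intro P h; simpa using h
  | succ n ih =>
    intro P h
    rw [pow_succ, mul_assoc] at h
    exact aux_X_mul_eq_zero s (ih h)

private lemma aux_reg {R : Type*} [CommRing R] {q : R} (hq : IsNilpotent q)
    {P : MvPowerSeries (Fin 2) R}
    (h : (MvPowerSeries.X (0 : Fin 2) * MvPowerSeries.X 1 - MvPowerSeries.C (σ := Fin 2) (R := R) q) * P = 0) :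
    P = 0 := by
  obtain ⟨n, hn⟩ := hq
  have key : ∀ k : ℕ, (MvPowerSeries.X (0 : Fin 2) * MvPowerSeries.X 1) ^ k * P =
      MvPowerSeries.C (σ := Fin 2) (R := R) (q ^ k) * P := by
    intro k
    induction k with
    | zero => simp
    | succ m ih =>
      have h' : (MvPowerSeries.X (0 : Fin 2) * MvPowerSeries.X 1) * P =
          MvPowerSeries.C (σ := Fin 2) (R := R) q * P := by
        rw [sub_mul] at h
        linear_combination h
      calc (MvPowerSeries.X (0 : Fin 2) * MvPowerSeries.X 1) ^ (m + 1) * P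
          = (MvPowerSeries.X (0 : Fin 2) * MvPowerSeries.X 1) ^ m *
            ((MvPowerSeries.X (0 : Fin 2) * MvPowerSeries.X 1) * P) := by ring
        _ = (MvPowerSeries.X (0 : Fin 2) * MvPowerSeries.X 1) ^ m *
            (MvPowerSeries.C (σ := Fin 2) (R := R) q * P) := by rw [h']
        _ = MvPowerSeries.C (σ := Fin 2) (R := R) q *
            ((MvPowerSeries.X (0 : Fin 2) * MvPowerSeries.X 1) ^ m * P) := by ring
        _ = MvPowerSeries.C (σ := Fin 2) (R := R) q * (MvPowerSeries.C (σ := Fin 2) (R := R) (q ^ m) * P) := by rw [ih]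
        _ = MvPowerSeries.C (σ := Fin 2) (R := R) (q ^ (m + 1)) * P := by rw [pow_succ, map_mul]; ring
  have h0 : (MvPowerSeries.X (0 : Fin 2) * MvPowerSeries.X 1) ^ n * P = 0 := by
    rw [key n, hn]; simp
  rw [mul_pow, mul_assoc] at h0
  exact aux_X_pow_mul_eq_zero 1 n (aux_X_pow_mul_eq_zero 0 n h0)

private lemma aux_X0_dvd {R : Type*} [CommRing R] {G H : MvPowerSeries (Fin 2) R}
    (h : MvPowerSeries.X (1 : Fin 2) * G = MvPowerSeries.X (0 : Fin 2) * H) :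
    MvPowerSeries.X (0 : Fin 2) ∣ G := by
  rw [MvPowerSeries.X_dvd_iff]
  intro m hm
  have h1 : MvPowerSeries.coeff (Finsupp.single (1 : Fin 2) 1 + m)
      (MvPowerSeries.X (1 : Fin 2) * G) = MvPowerSeries.coeff m G := by
    rw [MvPowerSeries.X_def]
    simpa using MvPowerSeries.coeff_add_monomial_mul (m := Finsupp.single (1 : Fin 2) 1)
      (n := m) (φ := G) (1 : R)
  rw [← h1, h, MvPowerSeries.X_def, MvPowerSeries.coeff_monomial_mul, if_neg]
  intro hle
  have := hle 0
  simp [Finsupp.single_apply, hm] at this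

private lemma aux_key {R : Type*} [CommRing R] {q : R} (hq : IsNilpotent q)
    {F : MvPowerSeries (Fin 2) R}
    (h1 : (MvPowerSeries.X (0 : Fin 2) * MvPowerSeries.X 1 - MvPowerSeries.C (σ := Fin 2) (R := R) q) ∣
      MvPowerSeries.X (0 : Fin 2) * F)
    (h2 : (MvPowerSeries.X (0 : Fin 2) * MvPowerSeries.X 1 - MvPowerSeries.C (σ := Fin 2) (R := R) q) ∣
      MvPowerSeries.X (1 : Fin 2) * F) :
    (MvPowerSeries.X (0 : Fin 2) * MvPowerSeries.X 1 - MvPowerSeries.C (σ := Fin 2) (R := R) q) ∣ F := by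
  set f := MvPowerSeries.X (0 : Fin 2) * MvPowerSeries.X 1 - MvPowerSeries.C (σ := Fin 2) (R := R) q with hf
  obtain ⟨G, hG⟩ := h1
  obtain ⟨H, hH⟩ := h2
  have hzero : f * (MvPowerSeries.X (1 : Fin 2) * G - MvPowerSeries.X (0 : Fin 2) * H) = 0 := by
    have : MvPowerSeries.X (1 : Fin 2) * (MvPowerSeries.X (0 : Fin 2) * F) -
        MvPowerSeries.X (0 : Fin 2) * (MvPowerSeries.X (1 : Fin 2) * F) = 0 := by ring
    rw [hG, hH] at this
    linear_combination this
  have hXGH : MvPowerSeries.X (1 : Fin 2) * G = MvPowerSeries.X (0 : Fin 2) * H :=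
    sub_eq_zero.mp (aux_reg hq hzero)
  obtain ⟨G', hG'⟩ := aux_X0_dvd hXGH
  refine ⟨G', ?_⟩
  have h0 : MvPowerSeries.X (0 : Fin 2) * (F - f * G') = 0 := by
    rw [mul_sub, hG, hG']
    ring
  have := aux_X_mul_eq_zero (0 : Fin 2) h0
  exact sub_eq_zero.mp this

/- In `A(R) = R[[x₁,x₂]]/(x₁x₂ - q)` with `q` nilpotent: if a unit `u` satisfies
`x₁·u = x₁` and `x₂·u⁻¹ = x₂`, then `u = 1`. -/
theorem unit_eq_one_of_fix (R : Type*) [CommRing R] (q : R) (hq : IsNilpotent q)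
    (u : (MvPowerSeries (Fin 2) R ⧸
        Ideal.span {MvPowerSeries.X (0 : Fin 2) * MvPowerSeries.X 1 -
          MvPowerSeries.C (σ := Fin 2) (R := R) q})ˣ)
    (h₁ : Ideal.Quotient.mk _ (MvPowerSeries.X (0 : Fin 2)) * (u : MvPowerSeries (Fin 2) R ⧸
        Ideal.span {MvPowerSeries.X (0 : Fin 2) * MvPowerSeries.X 1 -
          MvPowerSeries.C (σ := Fin 2) (R := R) q}) =
      Ideal.Quotient.mk _ (MvPowerSeries.X (0 : Fin 2)))
    (h₂ : Ideal.Quotient.mk _ (MvPowerSeries.X (1 : Fin 2)) * ((u⁻¹ : _ˣ) : MvPowerSeries (Fin 2) R ⧸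
        Ideal.span {MvPowerSeries.X (0 : Fin 2) * MvPowerSeries.X 1 -
          MvPowerSeries.C (σ := Fin 2) (R := R) q}) =
      Ideal.Quotient.mk _ (MvPowerSeries.X (1 : Fin 2))) :
    (u : MvPowerSeries (Fin 2) R ⧸
        Ideal.span {MvPowerSeries.X (0 : Fin 2) * MvPowerSeries.X 1 -
          MvPowerSeries.C (σ := Fin 2) (R := R) q}) = 1 := by
  have h₂' : Ideal.Quotient.mk (Ideal.span {MvPowerSeries.X (0 : Fin 2) * MvPowerSeries.X 1 -
        MvPowerSeries.C (σ := Fin 2) (R := R) q}) (MvPowerSeries.X (1 : Fin 2)) * (u : MvPowerSeries (Fin 2) R ⧸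
        Ideal.span {MvPowerSeries.X (0 : Fin 2) * MvPowerSeries.X 1 -
          MvPowerSeries.C (σ := Fin 2) (R := R) q}) =
      Ideal.Quotient.mk _ (MvPowerSeries.X (1 : Fin 2)) := by
    have h := congrArg (fun z => z * (u : MvPowerSeries (Fin 2) R ⧸
      Ideal.span {MvPowerSeries.X (0 : Fin 2) * MvPowerSeries.X 1 -
        MvPowerSeries.C (σ := Fin 2) (R := R) q})) h₂
    simp only [mul_assoc, Units.inv_mul, mul_one] at h
    exact h.symm
  obtain ⟨F, hF⟩ := Ideal.Quotient.mk_surjective ((u : MvPowerSeries (Fin 2) R ⧸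
    Ideal.span {MvPowerSeries.X (0 : Fin 2) * MvPowerSeries.X 1 -
      MvPowerSeries.C (σ := Fin 2) (R := R) q}) - 1)
  have hX0 : (MvPowerSeries.X (0 : Fin 2) * MvPowerSeries.X 1 - MvPowerSeries.C (σ := Fin 2) (R := R) q) ∣
      MvPowerSeries.X (0 : Fin 2) * F := by
    rw [← Ideal.mem_span_singleton, ← Ideal.Quotient.eq_zero_iff_mem, map_mul, hF,
      mul_sub, h₁, mul_one, sub_self]
  have hX1 : (MvPowerSeries.X (0 : Fin 2) * MvPowerSeries.X 1 - MvPowerSeries.C (σ := Fin 2) (R := R) q) ∣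
      MvPowerSeries.X (1 : Fin 2) * F := by
    rw [← Ideal.mem_span_singleton, ← Ideal.Quotient.eq_zero_iff_mem, map_mul, hF,
      mul_sub, h₂', mul_one, sub_self]
  have hFdvd := aux_key hq hX0 hX1
  have hz : Ideal.Quotient.mk (Ideal.span {MvPowerSeries.X (0 : Fin 2) * MvPowerSeries.X 1 -
      MvPowerSeries.C (σ := Fin 2) (R := R) q}) F = 0 := by
    rw [Ideal.Quotient.eq_zero_iff_mem, Ideal.mem_span_singleton]
    exact hFdvd
  rw [hF] at hz
  exact sub_eq_zero.mp hz
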